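/- Let q be an odd prime power with q ≡ 3 (mod 4), let γ be an even positive divisor of q - 1, and set n = (q-1)/γ with n > 2. Then for every integer l with 0 ≤ l and 2γl ≤ q - 3γ - 1 there exists a negacyclic Hermitian LCD code over F_{q²} of length n, dimension n - 2l - 1 and minimum distance exactly 2l + 2; in particular this code is MDS. -/

import Mathlib

open Finset

/-- The negacyclic shift of a word: `(c_0, ..., c_{n-1}) ↦ (-c_{n-1}, c_0, ..., c_{n-2})`. -/
def negashift {F : Type*} [Neg F] {n : ℕ} (c : Fin n → F) : Fin n → F :=
  fun i =>
    if _h : (i : ℕ) = 0 then -c ⟨n - 1, Nat.sub_lt i.pos Nat.one_pos⟩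
    else c ⟨(i : ℕ) - 1, lt_of_le_of_lt (Nat.sub_le _ _) i.isLt⟩

/-- A linear code `C ≤ F^n` is negacyclic if it is closed under the negacyclic shift. -/
def IsNegacyclic {F : Type*} [Field F] {n : ℕ} (C : Submodule F (Fin n → F)) : Prop :=
  ∀ c ∈ C, negashift c ∈ C

/-- `C` is an LCD code: `C ∩ C^⊥ = {0}` for the Euclidean inner product. -/
def IsLCD {F : Type*} [Field F] {n : ℕ} (C : Submodule F (Fin n → F)) : Prop :=
  ∀ x ∈ C, (∀ y ∈ C, ∑ i, x i * y i = 0) → x = 0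

/-- `C` is a Hermitian LCD code: `C ∩ C^{⊥H} = {0}` for the Hermitian inner product
`⟨x, y⟩ = ∑ x_i y_i^q`. -/
def IsHermLCD (q : ℕ) {F : Type*} [Field F] {n : ℕ} (C : Submodule F (Fin n → F)) : Prop :=
  ∀ x ∈ C, (∀ y ∈ C, ∑ i, x i * (y i) ^ q = 0) → x = 0

open scoped Classical in
/-- The Hamming weight of a word. -/
noncomputable def wt {F : Type*} [Zero F] {n : ℕ} (c : Fin n → F) : ℕ :=
  (Finset.univ.filter fun i => c i ≠ 0).card

/-- The minimum distance of the code `C` is exactly `d`: `d` is the least Hamming weight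
of a nonzero codeword. -/
def HasMinDist {F : Type*} [Zero F] {n : ℕ} (C : Set (Fin n → F)) (d : ℕ) : Prop :=
  IsLeast {w : ℕ | ∃ c ∈ C, c ≠ 0 ∧ wt c = w} d

lemma negashift_sum_eq_zero {F : Type*} [Field F] {n : ℕ} (c : Fin n → F) (b : F)
    (hb : b ^ n = -1) (hsum : ∑ i, c i * b ^ (i : ℕ) = 0) :
    ∑ i, negashift c i * b ^ (i : ℕ) = 0 := by
  cases n with
  | zero => simp
  | succ n' =>
    have h0 : negashift c 0 = -c (Fin.last n') := by
      simp [negashift, Fin.last]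
    have hs : ∀ i : Fin n', negashift c i.succ = c i.castSucc := by
      intro i
      simp [negashift, Fin.val_succ, Fin.castSucc, Fin.castAdd, Fin.castLE]
    rw [Fin.sum_univ_castSucc] at hsum
    simp only [Fin.coe_castSucc, Fin.val_last] at hsum
    have key : ∑ i : Fin n', c i.castSucc * b ^ (i : ℕ) = -(c (Fin.last n') * b ^ n') :=
      eq_neg_of_add_eq_zero_left hsum
    rw [Fin.sum_univ_succ, h0]
    simp only [hs, Fin.val_succ, Fin.val_zero, pow_zero, pow_succ]
    have h2 : ∑ i : Fin n', c i.castSucc * (b ^ (i : ℕ) * b)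
        = (∑ i : Fin n', c i.castSucc * b ^ (i : ℕ)) * b := by
      rw [Finset.sum_mul]; exact Finset.sum_congr rfl fun i _ => by ring
    rw [h2, key]
    linear_combination (-(c (Fin.last n'))) * hb

theorem stmt_15 (q : ℕ) (hq : IsPrimePow q) (hqodd : Odd q) (hmod : q % 4 = 3)
    (E : Type) [Field E] [Fintype E] (hE : Fintype.card E = q ^ 2)
    (γ : ℕ) (hγ : 0 < γ) (hγpar : Even γ) (hdvd : γ ∣ q - 1)
    (n : ℕ) (hn : n = (q - 1) / γ) (hn2 : 2 < n)
    (l : ℕ) (hl : 2 * γ * l + 3 * γ + 1 ≤ q) :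
    ∃ C : Submodule E (Fin n → E),
      IsNegacyclic C ∧ IsHermLCD q C ∧
      Module.finrank E C = n - 2 * l - 1 ∧
      HasMinDist (C : Set (Fin n → E)) (2 * l + 2) := by
  classical
  obtain ⟨p, m, hpp, hm, hpm⟩ := hq
  have hp : p.Prime := Nat.prime_iff.2 hpp
  have hq3 : 3 ≤ q := by omega
  have hγn : γ * n = q - 1 := by rw [hn]; exact Nat.mul_div_cancel' hdvd
  have h2l3 : 2 * l + 3 ≤ n := by
    have h1 : γ * (2 * l + 3) ≤ γ * n := by
      calc γ * (2 * l + 3) = 2 * γ * l + 3 * γ := by ring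
        _ ≤ q - 1 := by omega
        _ = γ * n := hγn.symm
    exact Nat.le_of_mul_le_mul_left h1 hγ
  obtain ⟨γ', hγ'⟩ := hγpar
  have hγ'pos : 0 < γ' := by omega
  obtain ⟨m0, hm0, hm0'⟩ : ∃ m0, q - 1 = m0 * 2 ∧ m0 = γ' * n :=
    ⟨γ' * n, by rw [← hγn, hγ']; ring, rfl⟩
  have hnodd : Odd n := by
    have h1 : Odd m0 := Nat.odd_iff.2 (by omega)
    rw [hm0'] at h1
    exact (Nat.odd_mul.1 h1).2
  have hn0 : 0 < n := by omega
  -- q = 2*n*γ' + 1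
  have hq1 : q = 2 * n * γ' + 1 := by
    have : q - 1 = 2 * n * γ' := by rw [← hγn, hγ']; ring
    omega
  -- 2*n ∣ q^2 - 1
  have hq2sub : (q - 1) * (q + 1) + 1 = q ^ 2 := by
    obtain ⟨q₀, rfl⟩ : ∃ q₀, q = q₀ + 3 := ⟨q - 3, by omega⟩
    show (q₀ + 2) * (q₀ + 3 + 1) + 1 = (q₀ + 3) ^ 2
    ring
  have h2ndvd2 : 2 * n ∣ q ^ 2 - 1 := by
    refine ⟨γ' * (q + 1), ?_⟩
    have h1 : q ^ 2 - 1 = (q - 1) * (q + 1) := by omega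
    rw [h1, ← hγn, hγ']; ring
  -- char p
  haveI hring : CharP E (ringChar E) := ringChar.charP E
  obtain ⟨n', hrp, hcard⟩ := FiniteField.card E (ringChar E)
  have hpq : p ∣ q := hpm ▸ dvd_pow_self p hm.ne'
  have hpr : p = ringChar E := by
    have h1 : p ∣ Fintype.card E := by
      rw [hE]
      exact hpq.trans (dvd_pow_self q two_ne_zero)
    rw [hcard] at h1
    exact (Nat.prime_dvd_prime_iff_eq hp hrp).1 (hp.dvd_of_dvd_pow h1)
  haveI hcharp : CharP E p := hpr ▸ hring
  haveI : Fact p.Prime := ⟨hp⟩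
  have hnE : (n : E) ≠ 0 := by
    intro h
    have hpn : p ∣ n := (CharP.cast_eq_zero_iff E p n).1 h
    have hpq1 : p ∣ q - 1 := hpn.trans ⟨γ, by rw [← hγn]; ring⟩
    have h1 : p ∣ q - (q - 1) := Nat.dvd_sub hpq hpq1
    have h2 : q - (q - 1) = 1 := by omega
    rw [h2] at h1
    exact hp.one_lt.ne' (Nat.eq_one_of_dvd_one h1)
  have hfrob : ∀ (s : Finset (Fin n)) (f : Fin n → E),
      (∑ i ∈ s, f i) ^ q = ∑ i ∈ s, (f i) ^ q := by
    intro s f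
    rw [← hpm]
    have h1 := map_sum (iterateFrobenius E p m) f s
    simp only [iterateFrobenius_def] at h1
    exact h1
  have hzq : ∀ z : E, (z ^ q) ^ q = z := by
    intro z
    rw [← pow_mul, ← sq, ← hE]
    exact FiniteField.pow_card z
  -- primitive 2n-th root of unity
  obtain ⟨ξ, hξ⟩ := IsCyclic.exists_generator (α := Eˣ)
  have hcardu : Fintype.card Eˣ = q ^ 2 - 1 := by rw [Fintype.card_units, hE]
  have hordξ : orderOf ξ = q ^ 2 - 1 := by
    rw [orderOf_eq_card_of_forall_mem_zpowers hξ, Nat.card_eq_fintype_card, hcardu]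
  have hq2ge : 9 ≤ q ^ 2 := by
    calc 9 = 3 * 3 := rfl
      _ ≤ q * q := Nat.mul_le_mul hq3 hq3
      _ = q ^ 2 := (sq q).symm
  set k := (q ^ 2 - 1) / (2 * n) with hk
  have hkk : 2 * n * k = q ^ 2 - 1 := Nat.mul_div_cancel' h2ndvd2
  have hkpos : 0 < k := by
    rcases Nat.eq_zero_or_pos k with h | h
    · rw [h, mul_zero] at hkk; omega
    · exact h
  set A := ξ ^ k with hA
  have hordA : orderOf A = 2 * n := by
    rw [hA, orderOf_pow, hordξ]
    have hkd : k ∣ q ^ 2 - 1 := ⟨2 * n, by rw [← hkk]; ring⟩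
    rw [Nat.gcd_eq_right hkd, ← hkk, Nat.mul_div_cancel _ hkpos]
  set α := (A : E) with hα
  have hα0 : α ≠ 0 := A.ne_zero
  have hαpow : ∀ j : ℕ, α ^ j = 1 ↔ 2 * n ∣ j := by
    intro j
    rw [hα, ← Units.val_pow_eq_pow_val, ← hordA]
    constructor
    · intro h
      exact orderOf_dvd_of_pow_eq_one (Units.ext (by rw [h, Units.val_one]))
    · intro h
      rw [orderOf_dvd_iff_pow_eq_one] at h
      rw [h, Units.val_one]
  have hα2n : α ^ (2 * n) = 1 := (hαpow _).2 dvd_rfl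
  have hαn : α ^ n = -1 := by
    have h2 : (α ^ n) * (α ^ n) = 1 := by
      rw [← pow_add]
      have : n + n = 2 * n := by ring
      rw [this, hα2n]
    rcases mul_self_eq_one_iff.1 h2 with h | h
    · exfalso
      have := Nat.le_of_dvd hn0 ((hαpow n).1 h)
      omega
    · exact h
  have hαq : ∀ j : ℕ, (α ^ j) ^ q = α ^ j := by
    intro j
    rw [← pow_mul]
    have h1 : j * q = 2 * n * (γ' * j) + j := by rw [hq1]; ring
    rw [h1, pow_add, pow_mul, hα2n, one_pow, one_mul]
  -- injectivity of i ↦ α^(2i) on [0, n)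
  have hcancel : ∀ i j : ℕ, i ≤ j → α ^ (2 * i) = α ^ (2 * j) → n ∣ j - i := by
    intro i j hij h
    have h1 : α ^ (2 * i) * α ^ (2 * (j - i)) = α ^ (2 * i) * 1 := by
      rw [mul_one, ← pow_add]
      rw [h]
      congr 1
      omega
    have h2 : α ^ (2 * (j - i)) = 1 := mul_left_cancel₀ (pow_ne_zero _ hα0) h1
    obtain ⟨c, hc⟩ := (hαpow _).1 h2
    have hc' : 2 * (j - i) = 2 * (n * c) := by rw [hc]; ring
    exact ⟨c, by omega⟩
  have hinjn : ∀ i j : ℕ, i < n → j < n → α ^ (2 * i) = α ^ (2 * j) → i = j := by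
    intro i j hi hj h
    rcases le_total i j with hij | hij
    · rcases Nat.eq_zero_or_pos (j - i) with h0 | h0
      · omega
      · have := Nat.le_of_dvd h0 (hcancel i j hij h)
        omega
    · rcases Nat.eq_zero_or_pos (i - j) with h0 | h0
      · omega
      · have := Nat.le_of_dvd h0 (hcancel j i hij h.symm)
        omega
  have hgeomsum : ∀ K : ℕ, ∑ i ∈ Finset.range n, (α ^ (2 * K)) ^ i
      = if n ∣ K then (n : E) else 0 := by
    intro K
    by_cases h : n ∣ K
    · rw [if_pos h]
      obtain ⟨c, rfl⟩ := h
      have h1 : α ^ (2 * (n * c)) = 1 := (hαpow _).2 ⟨c, by ring⟩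
      simp [h1]
    · rw [if_neg h]
      have hne : α ^ (2 * K) ≠ 1 := by
        intro hh
        obtain ⟨c, hc⟩ := (hαpow _).1 hh
        have hc' : 2 * K = 2 * (n * c) := by rw [hc]; ring
        exact h ⟨c, by omega⟩
      rw [geom_sum_eq hne]
      have h1 : (α ^ (2 * K)) ^ n = 1 := by
        rw [← pow_mul]
        exact (hαpow _).2 ⟨K, by ring⟩
      rw [h1]
      simp
  -- ============ the code ============
  set N := 2 * l + 1 with hN
  have hNn : N + 2 ≤ n := by omega
  set e : ℕ → ℕ := fun t => n - 2 * l + 2 * t with he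
  set β : ℕ → E := fun t => α ^ (e t) with hβ
  set M : Matrix (Fin N) (Fin n) E := Matrix.of fun t i => β (t : ℕ) ^ (i : ℕ) with hM
  set Φ := M.mulVecLin with hΦ
  set C := LinearMap.ker Φ with hC
  have hmem : ∀ x : Fin n → E,
      x ∈ C ↔ ∀ t : Fin N, ∑ i : Fin n, β (t : ℕ) ^ (i : ℕ) * x i = 0 := by
    intro x
    rw [hC, LinearMap.mem_ker, funext_iff]
    apply forall_congr'
    intro t
    simp [hΦ, Matrix.mulVecLin_apply, Matrix.mulVec, dotProduct, hM]
  have hβsplit : ∀ t i : ℕ, β t ^ i = α ^ ((n - 2 * l) * i) * (α ^ (2 * i)) ^ t := by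
    intro t i
    simp only [hβ, he]
    rw [← pow_mul, ← pow_mul, ← pow_add]
    congr 1
    ring
  have hβq : ∀ t : ℕ, β t ^ q = β t := fun t => hαq (e t)
  have hGram : ∀ s t : Fin N, ∑ i : Fin n, β (s : ℕ) ^ (i : ℕ) * β (t : ℕ) ^ (i : ℕ)
      = if (s : ℕ) + (t : ℕ) = 2 * l then (n : E) else 0 := by
    intro s t
    have hsl := s.isLt
    have htl := t.isLt
    set K := n - 2 * l + (s : ℕ) + (t : ℕ) with hK
    have h1 : ∀ i : Fin n, β (s : ℕ) ^ (i : ℕ) * β (t : ℕ) ^ (i : ℕ) = (α ^ (2 * K)) ^ (i : ℕ) := by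
      intro i
      simp only [hβ, he, hK]
      rw [← pow_mul, ← pow_mul, ← pow_add, ← pow_mul]
      congr 1
      ring
    rw [Finset.sum_congr rfl fun i _ => h1 i]
    rw [Fin.sum_univ_eq_sum_range (fun i => (α ^ (2 * K)) ^ i) n]
    rw [hgeomsum K]
    have h2 : n ∣ K ↔ (s : ℕ) + (t : ℕ) = 2 * l := by
      constructor
      · rintro ⟨c, hc⟩
        match c with
        | 0 => omega
        | 1 => omega
        | (c' + 2) =>
          have h3 : n * (c' + 2) = n * c' + 2 * n := by ring
          omega
      · intro h
        exact ⟨1, by omega⟩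
    rw [if_congr h2 rfl rfl]
  -- odd exponents
  have hβn : ∀ t : ℕ, β t ^ n = -1 := by
    intro t
    simp only [hβ, he]
    rw [← pow_mul, mul_comm, pow_mul, hαn]
    have hodd : Odd (n - 2 * l + 2 * t) := by
      rw [Nat.odd_iff] at hnodd ⊢
      omega
    exact hodd.neg_one_pow
  -- negacyclic
  have hneg : IsNegacyclic C := by
    intro c hc
    rw [hmem] at hc ⊢
    intro t
    have h1 : ∑ i, c i * β (t : ℕ) ^ (i : ℕ) = 0 := by
      rw [← hc t]
      exact Finset.sum_congr rfl fun i _ => by ring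
    have h2 := negashift_sum_eq_zero c (β (t : ℕ)) (hβn t) h1
    rw [← h2]
    exact Finset.sum_congr rfl fun i _ => by ring
  -- helper: swapping double sums
  have hswap : ∀ (g : Fin n → E) (a : Fin N → E),
      ∑ i : Fin n, g i * (∑ t : Fin N, a t * β (t : ℕ) ^ (i : ℕ))
      = ∑ t : Fin N, a t * ∑ i : Fin n, g i * β (t : ℕ) ^ (i : ℕ) := by
    intro g a
    calc ∑ i : Fin n, g i * (∑ t : Fin N, a t * β (t : ℕ) ^ (i : ℕ))
        = ∑ i : Fin n, ∑ t : Fin N, a t * (g i * β (t : ℕ) ^ (i : ℕ)) := by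
          refine Finset.sum_congr rfl fun i _ => ?_
          rw [Finset.mul_sum]
          exact Finset.sum_congr rfl fun t _ => by ring
      _ = ∑ t : Fin N, ∑ i : Fin n, a t * (g i * β (t : ℕ) ^ (i : ℕ)) := Finset.sum_comm
      _ = ∑ t : Fin N, a t * ∑ i : Fin n, g i * β (t : ℕ) ^ (i : ℕ) := by
          refine Finset.sum_congr rfl fun t _ => ?_
          rw [Finset.mul_sum]
  -- ============ Hermitian LCD ============
  have hherm : IsHermLCD q C := by
    intro x hxC hx
    have hperp : ∀ z, z ∈ C → ∑ i : Fin n, x i * z i = 0 := by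
      intro z hz
      have hy : (fun i => (z i) ^ q) ∈ C := by
        rw [hmem] at hz ⊢
        intro t
        have h1 : ∑ i : Fin n, β (t : ℕ) ^ (i : ℕ) * (z i) ^ q
            = (∑ i : Fin n, β (t : ℕ) ^ (i : ℕ) * z i) ^ q := by
          rw [hfrob]
          refine Finset.sum_congr rfl fun i _ => ?_
          rw [mul_pow]
          congr 1
          rw [← pow_mul]
          exact (hαq _).symm
        rw [h1, hz t, zero_pow (by omega : q ≠ 0)]
      have h2 := hx _ hy
      simp only [hzq] at h2
      exact h2
    have hxv : ∀ t : Fin N, ∑ i : Fin n, x i * β (t : ℕ) ^ (i : ℕ) = 0 := by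
      intro t
      rw [← (hmem x).1 hxC t]
      exact Finset.sum_congr rfl fun i _ => by ring
    have hclaim : ∀ u : Fin n → E, ∑ i : Fin n, x i * u i = 0 := by
      intro u
      set a : Fin N → E :=
        fun t => (∑ i : Fin n, β (2 * l - (t : ℕ)) ^ (i : ℕ) * u i) / n with ha
      set z : Fin n → E := fun i => u i - ∑ t : Fin N, a t * β (t : ℕ) ^ (i : ℕ) with hz
      have hzC : z ∈ C := by
        rw [hmem]
        intro s
        have hsl := s.isLt
        have h1 : ∑ i : Fin n, β (s : ℕ) ^ (i : ℕ) * z i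
            = (∑ i : Fin n, β (s : ℕ) ^ (i : ℕ) * u i)
              - ∑ t : Fin N, a t * (∑ i : Fin n, β (s : ℕ) ^ (i : ℕ) * β (t : ℕ) ^ (i : ℕ)) := by
          simp only [hz, mul_sub]
          rw [Finset.sum_sub_distrib]
          congr 1
          exact hswap (fun i => β (s : ℕ) ^ (i : ℕ)) a
        rw [h1]
        have h2 : ∑ t : Fin N, a t * (∑ i : Fin n, β (s : ℕ) ^ (i : ℕ) * β (t : ℕ) ^ (i : ℕ))
            = a ⟨2 * l - (s : ℕ), by omega⟩ * n := by
          rw [Finset.sum_eq_single (⟨2 * l - (s : ℕ), by omega⟩ : Fin N)]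
          · rw [hGram, if_pos (by simp; omega)]
          · intro t _ hts
            rw [hGram, if_neg, mul_zero]
            intro habs
            apply hts
            apply Fin.ext
            simp only
            omega
          · intro habs
            exact absurd (Finset.mem_univ _) habs
        rw [h2, ha]
        simp only
        rw [show 2 * l - (2 * l - (s : ℕ)) = (s : ℕ) by omega]
        rw [div_mul_cancel₀ _ hnE]
        exact sub_self _
      have hxz := hperp z hzC
      simp only [hz] at hxz
      have hexp : ∑ i : Fin n, x i * (u i - ∑ t : Fin N, a t * β (t : ℕ) ^ (i : ℕ))
          = (∑ i : Fin n, x i * u i)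
            - ∑ t : Fin N, a t * (∑ i : Fin n, x i * β (t : ℕ) ^ (i : ℕ)) := by
        simp only [mul_sub]
        rw [Finset.sum_sub_distrib]
        congr 1
        exact hswap x a
      rw [hexp] at hxz
      simp only [hxv, mul_zero, Finset.sum_const_zero, sub_zero] at hxz
      exact hxz
    funext i
    show x i = 0
    have h3 := hclaim (Pi.single i 1)
    simpa [Pi.single_apply] using h3
  -- ============ surjectivity and rank ============
  have hNlen : N ≤ n := by omega
  have hsurj : Function.Surjective Φ := by
    intro w
    set v : Fin N → E := fun t => α ^ (2 * (t : ℕ)) with hv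
    have hvinj' : Set.InjOn v (Finset.univ : Finset (Fin N)) := by
      intro s _ t _ h
      exact Fin.ext (hinjn _ _ (lt_of_lt_of_le s.isLt hNlen) (lt_of_lt_of_le t.isLt hNlen) h)
    set P := Lagrange.interpolate Finset.univ v w with hP
    have hdeg : P.natDegree < n := by
      by_cases hP0 : P = 0
      · rw [hP0]; simpa using hn0
      · have h1 := Lagrange.degree_interpolate_lt (r := w) hvinj'
        rw [Finset.card_univ, Fintype.card_fin] at h1
        have h2 := (Polynomial.natDegree_lt_iff_degree_lt hP0).2 h1
        omega
    refine ⟨fun i => P.coeff (i : ℕ) / α ^ ((n - 2 * l) * (i : ℕ)), ?_⟩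
    funext t
    have hunfold : Φ (fun i => P.coeff (i : ℕ) / α ^ ((n - 2 * l) * (i : ℕ))) t
        = ∑ i : Fin n, β (t : ℕ) ^ (i : ℕ) * (P.coeff (i : ℕ) / α ^ ((n - 2 * l) * (i : ℕ))) := by
      simp [hΦ, Matrix.mulVecLin_apply, Matrix.mulVec, dotProduct, hM]
    rw [hunfold]
    have hterm : ∀ i : Fin n, β (t : ℕ) ^ (i : ℕ) * (P.coeff (i : ℕ) / α ^ ((n - 2 * l) * (i : ℕ)))
        = P.coeff (i : ℕ) * (v t) ^ (i : ℕ) := by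
      intro i
      rw [hβsplit]
      have hvt : (α ^ (2 * (i : ℕ))) ^ (t : ℕ) = (v t) ^ (i : ℕ) := by
        simp only [hv]
        rw [← pow_mul, ← pow_mul]
        ring_nf
      rw [hvt]
      have hA0 : α ^ ((n - 2 * l) * (i : ℕ)) ≠ 0 := pow_ne_zero _ hα0
      field_simp
    calc ∑ i : Fin n, β (t : ℕ) ^ (i : ℕ) * (P.coeff (i : ℕ) / α ^ ((n - 2 * l) * (i : ℕ)))
        = ∑ i : Fin n, P.coeff (i : ℕ) * (v t) ^ (i : ℕ) :=
          Finset.sum_congr rfl fun i _ => hterm i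
      _ = ∑ k ∈ Finset.range n, P.coeff k * (v t) ^ k :=
          Fin.sum_univ_eq_sum_range (fun k => P.coeff k * (v t) ^ k) n
      _ = P.eval (v t) := (Polynomial.eval_eq_sum_range' hdeg (v t)).symm
      _ = w t := Lagrange.eval_interpolate_at_node w hvinj' (Finset.mem_univ t)
  have hrank : Module.finrank E C = n - 2 * l - 1 := by
    have h1 := LinearMap.finrank_range_add_finrank_ker Φ
    rw [LinearMap.range_eq_top.2 hsurj, finrank_top, Module.finrank_pi, Module.finrank_pi,
      Fintype.card_fin, Fintype.card_fin] at h1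
    have h2 : Module.finrank E C = Module.finrank E (LinearMap.ker Φ) := by rw [hC]
    omega
  -- ============ minimum distance lower bound ============
  have hlb : ∀ c : Fin n → E, c ∈ C → c ≠ 0 → 2 * l + 2 ≤ wt c := by
    intro c hcC hc0
    by_contra hlt
    push_neg at hlt
    have hwt : wt c = (Finset.univ.filter fun i : Fin n => c i ≠ 0).card := rfl
    set S := Finset.univ.filter fun i : Fin n => c i ≠ 0 with hS
    have hScard : S.card ≤ N := by omega
    have hSmem : ∀ i : Fin n, i ∈ S ↔ c i ≠ 0 := by
      intro i
      simp [hS]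
    have hSne : S.Nonempty := by
      by_contra hemp
      rw [Finset.not_nonempty_iff_eq_empty] at hemp
      apply hc0
      funext i
      show c i = 0
      by_contra hci
      have h4 : i ∈ S := (hSmem i).2 hci
      simp [hemp] at h4
    obtain ⟨i₀, hi₀⟩ := hSne
    set v : Fin n → E := fun i => α ^ (2 * (i : ℕ)) with hv
    have hvS : Set.InjOn v (S : Set (Fin n)) := by
      intro i _ j _ hij
      exact Fin.ext (hinjn _ _ i.isLt j.isLt hij)
    set f := Lagrange.basis S v i₀ with hf
    have hfne : f ≠ 0 := Lagrange.basis_ne_zero hvS hi₀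
    have hfdeg : f.natDegree < N := by
      rw [Polynomial.natDegree_lt_iff_degree_lt hfne, Lagrange.degree_basis hvS hi₀]
      exact_mod_cast (by omega : S.card - 1 < N)
    set d : Fin n → E := fun i => c i * α ^ ((n - 2 * l) * (i : ℕ)) with hd
    have hkey : ∀ t : ℕ, t < N → ∑ i ∈ S, d i * (v i) ^ t = 0 := by
      intro t ht
      have h1 := (hmem c).1 hcC ⟨t, ht⟩
      have h2 : ∀ i : Fin n, β t ^ (i : ℕ) * c i = d i * (v i) ^ t := by
        intro i
        rw [hβsplit]
        simp only [hd, hv]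
        ring
      calc ∑ i ∈ S, d i * (v i) ^ t
          = ∑ i : Fin n, d i * (v i) ^ t := by
            refine Finset.sum_subset (Finset.subset_univ S) fun i _ hiS => ?_
            have : c i = 0 := by
              by_contra hci
              exact hiS ((hSmem i).2 hci)
            simp [hd, this]
        _ = ∑ i : Fin n, β t ^ (i : ℕ) * c i := Finset.sum_congr rfl fun i _ => (h2 i).symm
        _ = 0 := h1
    have hd0 : d i₀ = 0 := by
      have e1 : d i₀ = ∑ i ∈ S, d i * f.eval (v i) := by
        rw [Finset.sum_eq_single i₀]
        · rw [Lagrange.eval_basis_self hvS hi₀, mul_one]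
        · intro j hj hji
          rw [Lagrange.eval_basis_of_ne (Ne.symm hji) hj, mul_zero]
        · intro h
          exact absurd hi₀ h
      have e2 : ∑ i ∈ S, d i * f.eval (v i)
          = ∑ t ∈ Finset.range N, f.coeff t * ∑ i ∈ S, d i * (v i) ^ t := by
        have h5 : ∀ i ∈ S, d i * f.eval (v i)
            = ∑ t ∈ Finset.range N, f.coeff t * (d i * (v i) ^ t) := by
          intro i _
          rw [Polynomial.eval_eq_sum_range' hfdeg (v i), Finset.mul_sum]
          exact Finset.sum_congr rfl fun t _ => by ring
        rw [Finset.sum_congr rfl h5, Finset.sum_comm]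
        exact Finset.sum_congr rfl fun t _ => by rw [Finset.mul_sum]
      rw [e1, e2]
      apply Finset.sum_eq_zero
      intro t ht
      rw [hkey t (Finset.mem_range.1 ht), mul_zero]
    simp only [hd] at hd0
    rcases mul_eq_zero.1 hd0 with h | h
    · exact ((hSmem i₀).1 hi₀) h
    · exact pow_ne_zero _ hα0 h
  -- ============ a codeword of weight exactly 2l+2 ============
  have hach : ∃ c : Fin n → E, c ∈ C ∧ c ≠ 0 ∧ wt c = 2 * l + 2 := by
    set P : Polynomial E := ∏ t ∈ Finset.range N, (Polynomial.X - Polynomial.C (β t)) with hP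
    have hPmonic : P.Monic :=
      Polynomial.monic_prod_of_monic _ _ fun t _ => Polynomial.monic_X_sub_C _
    have hPdeg : P.natDegree = N := by
      rw [hP, Polynomial.natDegree_prod _ _ fun t _ => Polynomial.X_sub_C_ne_zero _]
      simp [Polynomial.natDegree_X_sub_C]
    set c : Fin n → E := fun i => P.coeff (i : ℕ) with hc
    have hcC : c ∈ C := by
      rw [hmem]
      intro t
      have h1 : ∑ i : Fin n, β (t : ℕ) ^ (i : ℕ) * c i = P.eval (β (t : ℕ)) := by
        rw [Polynomial.eval_eq_sum_range' (show P.natDegree < n by omega) (β (t : ℕ))]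
        rw [← Fin.sum_univ_eq_sum_range (fun k => P.coeff k * β (t : ℕ) ^ k) n]
        exact Finset.sum_congr rfl fun i _ => by simp only [hc]; ring
      rw [h1, hP, Polynomial.eval_prod]
      apply Finset.prod_eq_zero (Finset.mem_range.2 t.isLt)
      simp
    have hcN : c ⟨N, by omega⟩ = 1 := by
      show P.coeff N = 1
      rw [← hPdeg]
      exact hPmonic.coeff_natDegree
    have hc0 : c ≠ 0 := by
      intro h
      rw [h] at hcN
      simp at hcN
    have hub : wt c ≤ 2 * l + 2 := by
      have hsub : (Finset.univ.filter fun i : Fin n => c i ≠ 0)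
          ⊆ Finset.univ.filter fun i : Fin n => (i : ℕ) < N + 1 := by
        intro i hi
        simp only [Finset.mem_filter, Finset.mem_univ, true_and] at hi ⊢
        by_contra hgt
        push_neg at hgt
        exact hi (by simp only [hc]; exact Polynomial.coeff_eq_zero_of_natDegree_lt (by omega))
      have hcard2 : (Finset.univ.filter fun i : Fin n => (i : ℕ) < N + 1).card ≤ N + 1 := by
        have h3 : (Finset.univ.filter fun i : Fin n => (i : ℕ) < N + 1).card
            ≤ (Finset.range (N + 1)).card := by
          apply Finset.card_le_card_of_injOn (fun i : Fin n => (i : ℕ))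
          · intro i hi
            rw [Finset.mem_coe, Finset.mem_filter] at hi
            exact Finset.mem_coe.2 (Finset.mem_range.2 hi.2)
          · intro i _ j _ h
            exact Fin.ext h
        simpa using h3
      have h4 := Finset.card_le_card hsub
      have hwt : wt c = (Finset.univ.filter fun i : Fin n => c i ≠ 0).card := rfl
      omega
    exact ⟨c, hcC, hc0, le_antisymm hub (hlb c hcC hc0)⟩
  -- ============ assembly ============
  refine ⟨C, hneg, hherm, hrank, ?_⟩
  obtain ⟨c, h1, h2, h3⟩ := hach
  constructor
  · exact ⟨c, h1, h2, h3⟩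
  · rintro w ⟨c', hc', hne', rfl⟩
    exact hlb c' hc' hne'
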